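/- arXiv:math/0305076 — 2 statements merged into one kernel-verified Lean document; each statement's English description precedes it below -/
import Mathlib

section
/- Let A be a closed subalgebra of C(X) separating points and containing constants, and let P be a closed subset of X that is an intersection of sets H with χ_H ∈ A (i.e., P = P̃, where P̃ = ⋂{H clopen : χ_H ∈ A, P ⊆ H}). Then A↾P is closed in C(P). -/
open Classical Set

/-- `χ_H ∈ A`: the characteristic function of `H` belongs to `A`. -/
noncomputable def chiMem {X : Type*} [TopologicalSpace X]
    (A : Subalgebra ℂ C(X, ℂ)) (H : Set X) : Prop :=
  ∃ g ∈ A, ∀ x, g x = if x ∈ H then (1 : ℂ) else 0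

/-- The restriction algebra `A↾P = {f↾P : f ∈ A}`. -/
def restrictSet {X : Type*} [TopologicalSpace X] (A : Subalgebra ℂ C(X, ℂ)) (P : Set X) :
    Set C(P, ℂ) :=
  {g | ∃ f ∈ A, f.restrict P = g}

lemma chiMem_univ {X : Type*} [TopologicalSpace X] (A : Subalgebra ℂ C(X, ℂ)) :
    chiMem A (Set.univ : Set X) :=
  ⟨1, one_mem _, fun x => by simp⟩

lemma chiMem_inter {X : Type*} [TopologicalSpace X] {A : Subalgebra ℂ C(X, ℂ)}
    {H₁ H₂ : Set X} (h₁ : chiMem A H₁) (h₂ : chiMem A H₂) : chiMem A (H₁ ∩ H₂) := by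
  obtain ⟨g₁, hg₁, he₁⟩ := h₁
  obtain ⟨g₂, hg₂, he₂⟩ := h₂
  refine ⟨g₁ * g₂, mul_mem hg₁ hg₂, fun x => ?_⟩
  have : (g₁ * g₂) x = g₁ x * g₂ x := by simp
  rw [this, he₁ x, he₂ x]
  by_cases hx1 : x ∈ H₁ <;> by_cases hx2 : x ∈ H₂ <;> simp [hx1, hx2]

/-- Key lemma: if `P = P̃` and `‖f‖ < ε` on `P`, then `‖f‖ < ε` on some `H ∈ B_A`
containing `P`. -/
lemma exists_clopen_bound {X : Type*} [TopologicalSpace X] [CompactSpace X] [T2Space X]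
    (A : Subalgebra ℂ C(X, ℂ)) (P : Set X)
    (hPt : P = ⋂₀ {H : Set X | IsClopen H ∧ chiMem A H ∧ P ⊆ H})
    (f : C(X, ℂ)) (ε : ℝ) (hε : ∀ x ∈ P, ‖f x‖ < ε) :
    ∃ H : Set X, IsClopen H ∧ chiMem A H ∧ P ⊆ H ∧ ∀ x ∈ H, ‖f x‖ < ε := by
  set F := {H : Set X | IsClopen H ∧ chiMem A H ∧ P ⊆ H} with hF
  set K := {x : X | ε ≤ ‖f x‖} with hK
  have hKc : IsClosed K := isClosed_le continuous_const f.continuous.norm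
  have hKcm : IsCompact K := hKc.isCompact
  have hcover : K ⊆ ⋃ H : F, ((H : Set X)ᶜ) := by
    intro x hx
    have hxP : x ∉ P := fun hxp => absurd (hε x hxp) (not_lt.mpr hx)
    rw [hPt, Set.mem_sInter] at hxP
    push_neg at hxP
    obtain ⟨H, hH, hxH⟩ := hxP
    exact Set.mem_iUnion.mpr ⟨⟨H, hH⟩, hxH⟩
  obtain ⟨t, ht⟩ := hKcm.elim_finite_subcover (fun H : F => ((H : Set X)ᶜ))
    (fun H => H.2.1.isClosed.isOpen_compl) hcover
  have main : ∀ s : Finset F, IsClopen (⋂ H ∈ s, (H : Set X)) ∧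
      chiMem A (⋂ H ∈ s, (H : Set X)) ∧ P ⊆ ⋂ H ∈ s, (H : Set X) := by
    intro s
    induction s using Finset.induction_on with
    | empty =>
        rw [show (⋂ H ∈ (∅ : Finset F), (H : Set X)) = Set.univ by simp]
        exact ⟨isClopen_univ, chiMem_univ A, Set.subset_univ P⟩
    | @insert a s ha ih =>
      rw [Finset.set_biInter_insert]
      exact ⟨a.2.1.inter ih.1, chiMem_inter a.2.2.1 ih.2.1,
        Set.subset_inter a.2.2.2 ih.2.2⟩
  refine ⟨⋂ H ∈ t, (H : Set X), (main t).1, (main t).2.1, (main t).2.2, fun x hx => ?_⟩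
  by_contra hcon
  have hxK : x ∈ K := le_of_not_gt hcon
  obtain ⟨H, hHt, hxH⟩ := Set.mem_iUnion₂.mp (ht hxK)
  exact hxH (Set.mem_iInter₂.mp hx H hHt)

/-- If `A ≤ C(X, ℂ)` is a closed subalgebra separating points, and `P` is a closed subset
of `X` with `P = P̃ = ⋂ {H : H clopen, χ_H ∈ A, P ⊆ H}`, then `A↾P` is closed in `C(P, ℂ)`. -/
theorem stmt4 {X : Type*} [TopologicalSpace X] [CompactSpace X] [T2Space X]
    (A : Subalgebra ℂ C(X, ℂ)) (hA : A.SeparatesPoints)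
    (hAcl : IsClosed (A : Set C(X, ℂ)))
    (P : Set X) (hP : IsClosed P)
    (hPt : P = ⋂₀ {H : Set X | IsClopen H ∧ chiMem A H ∧ P ⊆ H}) :
    IsClosed (restrictSet A P) := by
  have : CompactSpace P := isCompact_iff_compactSpace.mp hP.isCompact
  apply isClosed_of_closure_subset
  intro g hg
  rw [Metric.mem_closure_iff] at hg
  have hchoice : ∀ n : ℕ, ∃ f : C(X, ℂ), f ∈ A ∧
      dist g (f.restrict P) < (2 : ℝ)⁻¹ ^ n := by
    intro n
    obtain ⟨b, hb, hdb⟩ := hg ((2 : ℝ)⁻¹ ^ n) (by positivity)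
    obtain ⟨f, hfA, hfb⟩ := hb
    exact ⟨f, hfA, by rwa [hfb]⟩
  choose f hfA hfd using hchoice
  set d : ℕ → C(X, ℂ) := fun n => f (n + 1) - f n with hd
  have hdA : ∀ n, d n ∈ A := fun n => sub_mem (hfA _) (hfA _)
  have hdP : ∀ n, ∀ x ∈ P, ‖d n x‖ < 3 * (2 : ℝ)⁻¹ ^ n := by
    intro n x hx
    have hres : (d n).restrict P = (f (n + 1)).restrict P - (f n).restrict P := by
      ext y; simp [hd]
    have h1 : ‖(d n).restrict P‖ < 3 * (2 : ℝ)⁻¹ ^ n := by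
      rw [hres]
      have h2 : ‖(f (n + 1)).restrict P - (f n).restrict P‖
          = dist ((f (n + 1)).restrict P) ((f n).restrict P) := (dist_eq_norm _ _).symm
      rw [h2]
      calc dist ((f (n + 1)).restrict P) ((f n).restrict P)
          ≤ dist ((f (n + 1)).restrict P) g + dist g ((f n).restrict P) :=
            dist_triangle _ _ _
        _ < (2 : ℝ)⁻¹ ^ (n + 1) + (2 : ℝ)⁻¹ ^ n := by
            have ha : dist ((f (n + 1)).restrict P) g < (2 : ℝ)⁻¹ ^ (n + 1) := by
              rw [dist_comm]; exact hfd (n + 1)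
            exact add_lt_add ha (hfd n)
        _ ≤ 3 * (2 : ℝ)⁻¹ ^ n := by
            rw [pow_succ]
            have hp : (0:ℝ) ≤ (2 : ℝ)⁻¹ ^ n := by positivity
            linarith
    calc ‖d n x‖ = ‖((d n).restrict P) ⟨x, hx⟩‖ := by simp
      _ ≤ ‖(d n).restrict P‖ := ContinuousMap.norm_coe_le_norm _ _
      _ < 3 * (2 : ℝ)⁻¹ ^ n := h1
  have hHex : ∀ n, ∃ H : Set X, IsClopen H ∧ chiMem A H ∧ P ⊆ H ∧
      ∀ x ∈ H, ‖d n x‖ < 3 * (2 : ℝ)⁻¹ ^ n := fun n =>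
    exists_clopen_bound A P hPt (d n) _ (hdP n)
  choose H hHcl hHchi hHP hHbd using hHex
  choose e heA heval using fun n => hHchi n
  set v : ℕ → C(X, ℂ) := fun n => d n * e n with hv
  have hvA : ∀ n, v n ∈ A := fun n => mul_mem (hdA n) (heA n)
  have hvnorm : ∀ n, ‖v n‖ ≤ 3 * (2 : ℝ)⁻¹ ^ n := by
    intro n
    refine (ContinuousMap.norm_le _ (by positivity)).mpr fun x => ?_
    have hvx : v n x = d n x * e n x := by simp [hv]
    by_cases hx : x ∈ H n
    · rw [hvx, heval n x, if_pos hx, mul_one]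
      exact (hHbd n x hx).le
    · rw [hvx, heval n x, if_neg hx, mul_zero, norm_zero]
      positivity
  have hvsum : Summable v := by
    apply Summable.of_norm_bounded _ hvnorm
    exact (summable_geometric_of_lt_one (by norm_num) (by norm_num)).mul_left 3
  set F : C(X, ℂ) := f 0 + ∑' n, v n with hFdef
  have hpartial : Filter.Tendsto (fun n => f 0 + ∑ k ∈ Finset.range n, v k)
      Filter.atTop (nhds F) := by
    exact (hvsum.hasSum.tendsto_sum_nat).const_add (f 0)
  have hFA : F ∈ A := by
    refine hAcl.mem_of_tendsto hpartial (Filter.Eventually.of_forall fun n => ?_)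
    exact add_mem (hfA 0) (sum_mem fun k _ => hvA k)
  -- restriction is 1-Lipschitz, hence continuous
  have hRlip : LipschitzWith 1 (fun h : C(X, ℂ) => h.restrict P) := by
    apply LipschitzWith.of_dist_le_mul
    intro a b
    rw [NNReal.coe_one, one_mul]
    refine (ContinuousMap.dist_le dist_nonneg).mpr fun x => ?_
    simpa using ContinuousMap.dist_apply_le_dist (f := a) (g := b) (x : X)
  have hres_eq : ∀ n, (f 0 + ∑ k ∈ Finset.range n, v k).restrict P = (f n).restrict P := by
    intro n
    ext x
    have hx : (x : X) ∈ P := x.2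
    have hvk : ∀ k, v k (x : X) = d k (x : X) := by
      intro k
      have : v k (x : X) = d k (x : X) * e k (x : X) := by simp [hv]
      rw [this, heval k (x : X), if_pos (hHP k hx), mul_one]
    have hsum : (∑ k ∈ Finset.range n, v k) (x : X)
        = ∑ k ∈ Finset.range n, (f (k + 1) (x : X) - f k (x : X)) := by
      rw [ContinuousMap.sum_apply]
      exact Finset.sum_congr rfl fun k _ => by rw [hvk k]; simp [hd]
    have htel : ∑ k ∈ Finset.range n, (f (k + 1) (x : X) - f k (x : X))
        = f n (x : X) - f 0 (x : X) := Finset.sum_range_sub (fun k => f k (x : X)) n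
    simp only [ContinuousMap.restrict_apply, ContinuousMap.add_apply]
    rw [hsum, htel]
    ring
  have h1 : Filter.Tendsto (fun n => (f 0 + ∑ k ∈ Finset.range n, v k).restrict P)
      Filter.atTop (nhds (F.restrict P)) := (hRlip.continuous.tendsto F).comp hpartial
  have h2 : Filter.Tendsto (fun n => (f n).restrict P) Filter.atTop (nhds g) := by
    rw [tendsto_iff_dist_tendsto_zero]
    have hub : ∀ n, dist ((f n).restrict P) g ≤ (2 : ℝ)⁻¹ ^ n := fun n =>
      (dist_comm g ((f n).restrict P) ▸ hfd n).le
    refine squeeze_zero (fun n => dist_nonneg) hub ?_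
    exact tendsto_pow_atTop_nhds_zero_of_lt_one (by norm_num) (by norm_num)
  have h1' : Filter.Tendsto (fun n => (f n).restrict P) Filter.atTop (nhds (F.restrict P)) := by
    simpa only [hres_eq] using h1
  have : F.restrict P = g := tendsto_nhds_unique h1' h2
  exact ⟨F, hFA, this⟩
end

section
/- Let X be compact Hausdorff and A a closed proper subalgebra of C(X) separating points and containing constants. Then E(A) ∪ Sh(A) = X and E(A) ∩ Sh(A) ≠ ∅, where E(A) is the essential set and Sh(A) the Šilov boundary. Moreover, every isolated point p of Sh(A) is isolated in X with χ_{{p}} ∈ A, and hence the Šilov boundary of A↾E(A) is perfect when E(A) ≠ ∅. -/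
open Classical Set

/-- `H` is a (closed) boundary for `B`: `sup_H |f| = sup_X |f|` for all `f ∈ B`. -/
noncomputable def IsBoundary {Y : Type*} [TopologicalSpace Y]
    (B : Subalgebra ℂ C(Y, ℂ)) (H : Set Y) : Prop :=
  IsClosed H ∧ ∀ f ∈ B, sSup ((fun y => ‖f y‖) '' H) = sSup ((fun y => ‖f y‖) '' Set.univ)

/-- `H` is essential for `A`: membership in `A` of `f ∈ C(X, ℂ)` depends only on `f↾H`. -/
def IsEssential {X : Type*} [TopologicalSpace X]
    (A : Subalgebra ℂ C(X, ℂ)) (H : Set X) : Prop :=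
  IsClosed H ∧ ∀ f g : C(X, ℂ), f.restrict H = g.restrict H → (f ∈ A ↔ g ∈ A)

/-- The restriction of `A` to `E`, as a subalgebra of `C(E, ℂ)`. -/
noncomputable def restrictAlg {X : Type*} [TopologicalSpace X] (A : Subalgebra ℂ C(X, ℂ)) (E : Set X) :
    Subalgebra ℂ C(E, ℂ) :=
  A.map (ContinuousMap.compRightAlgHom ℂ ℂ ⟨Subtype.val, continuous_subtype_val⟩)

section Aux

set_option linter.unusedSectionVars false

noncomputable def nsup {X : Type*} [TopologicalSpace X] (f : C(X,ℂ)) (K : Set X) : ℝ :=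
  sSup ((fun y => ‖f y‖) '' K)

variable {X : Type*} [TopologicalSpace X] [CompactSpace X]

lemma nsup_bdd (f : C(X,ℂ)) (K : Set X) : BddAbove ((fun y => ‖f y‖) '' K) :=
  ⟨‖f‖, by rintro _ ⟨x, _, rfl⟩; exact f.norm_coe_le_norm x⟩

lemma le_nsup (f : C(X,ℂ)) {K : Set X} {x : X} (hx : x ∈ K) : ‖f x‖ ≤ nsup f K :=
  le_csSup (nsup_bdd f K) (mem_image_of_mem _ hx)

lemma nsup_le (f : C(X,ℂ)) {K : Set X} {c : ℝ} (hc : 0 ≤ c)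
    (h : ∀ x ∈ K, ‖f x‖ ≤ c) : nsup f K ≤ c :=
  Real.sSup_le (by rintro _ ⟨x, hx, rfl⟩; exact h x hx) hc

lemma nsup_nonneg (f : C(X,ℂ)) (K : Set X) : 0 ≤ nsup f K :=
  Real.sSup_nonneg (by rintro _ ⟨x, _, rfl⟩; exact norm_nonneg _)

lemma nsup_univ [Nonempty X] (f : C(X,ℂ)) : nsup f univ = ‖f‖ := by
  refine le_antisymm (nsup_le f (norm_nonneg f) fun x _ => f.norm_coe_le_norm x) ?_
  rw [ContinuousMap.norm_eq_iSup_norm, iSup, ← Set.image_univ]; exact le_rfl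

lemma nsup_attain (f : C(X,ℂ)) {K : Set X} (hK : IsClosed K) (hne : K.Nonempty) :
    ∃ x ∈ K, nsup f K = ‖f x‖ := by
  obtain ⟨x, hx, hmax⟩ := hK.isCompact.exists_isMaxOn hne
    (Continuous.norm (map_continuous f)).continuousOn
  exact ⟨x, hx, le_antisymm (nsup_le f (norm_nonneg _) hmax) (le_nsup f hx)⟩

lemma nsup_le_univ [Nonempty X] (f : C(X,ℂ)) (K : Set X) : nsup f K ≤ nsup f univ := by
  rw [nsup_univ]; exact nsup_le f (norm_nonneg f) fun x _ => f.norm_coe_le_norm x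

lemma urysohnC {X : Type*} [TopologicalSpace X] [CompactSpace X] [T2Space X] {s t : Set X}
    (hs : IsClosed s) (ht : IsClosed t) (hd : Disjoint s t) :
    ∃ f : C(X,ℂ), (∀ x ∈ s, f x = 0) ∧ (∀ x ∈ t, f x = 1) ∧ ∀ x, ‖f x‖ ≤ 1 := by
  obtain ⟨u, hu0, hu1, huI⟩ := exists_continuous_zero_one_of_isClosed hs ht hd
  refine ⟨ContinuousMap.comp ⟨Complex.ofReal, Complex.continuous_ofReal⟩ u, ?_, ?_, ?_⟩
  · intro x hx; simp [hu0 hx]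
  · intro x hx; simp [hu1 hx]
  · intro x
    simp only [ContinuousMap.comp_apply, ContinuousMap.coe_mk, Complex.norm_real]
    exact abs_le.2 ⟨by linarith [(huI x).1], (huI x).2⟩

lemma vanish_mem {X : Type*} [TopologicalSpace X] (A : Subalgebra ℂ C(X,ℂ)) {E : Set X}
    (hE : IsEssential A E) {f : C(X,ℂ)} (hf : ∀ x ∈ E, f x = 0) : f ∈ A :=
  (hE.2 f 0 (ContinuousMap.ext fun x => by simpa using hf x x.2)).mpr (zero_mem A)

lemma empty_not_essential {X : Type*} [TopologicalSpace X]
    (A : Subalgebra ℂ C(X,ℂ)) (hAne : A ≠ ⊤) (hE : IsEssential A (∅ : Set X)) : False := by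
  apply hAne
  rw [Algebra.eq_top_iff]
  intro f
  exact (hE.2 f 1 (ContinuousMap.ext fun x => absurd x.2 (Set.notMem_empty _))).mpr (one_mem A)

lemma X_nonempty {X : Type*} [TopologicalSpace X]
    (A : Subalgebra ℂ C(X,ℂ)) (hAne : A ≠ ⊤) : Nonempty X := by
  by_contra h
  rw [not_nonempty_iff] at h
  refine hAne (Algebra.eq_top_iff.2 fun f => ?_)
  have : f = 0 := ContinuousMap.ext fun x => h.elim x
  rw [this]; exact zero_mem A

/-- Core lemma: an isolated point of the minimal boundary is open, with characteristic
function in the (closed, point-separating) algebra. -/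
lemma core {Y : Type*} [TopologicalSpace Y] [CompactSpace Y] [T2Space Y]
    (B : Subalgebra ℂ C(Y, ℂ)) (hB : B.SeparatesPoints) (hBcl : IsClosed (B : Set C(Y, ℂ)))
    (S : Set Y) (hS : IsBoundary B S) (hSmin : ∀ T, IsBoundary B T → S ⊆ T)
    {p : Y} (hp : p ∈ S) {U : Set Y} (hU : IsOpen U) (hUS : U ∩ S = {p}) :
    ∃ e : C(Y,ℂ), e ∈ B ∧ (∀ x, e x = if x = p then 1 else 0) ∧ IsOpen ({p} : Set Y) := by
  haveI : Nonempty Y := ⟨p⟩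
  have hpU : p ∈ U := by
    have h0 : p ∈ U ∩ S := by rw [hUS]; exact mem_singleton p
    exact h0.1
  set S0 : Set Y := S \ {p} with hS0def
  have hS0c : IsClosed S0 := by
    have h0 : S0 = S ∩ Uᶜ := by
      ext y; constructor
      · rintro ⟨hyS, hyp⟩
        refine ⟨hyS, fun hyU => hyp ?_⟩
        have h1 : y ∈ U ∩ S := ⟨hyU, hyS⟩
        rw [hUS] at h1; exact h1
      · rintro ⟨hyS, hyU⟩
        refine ⟨hyS, fun hyp => hyU ?_⟩
        rw [mem_singleton_iff] at hyp; rw [hyp]; exact hpU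
    rw [h0]; exact hS.1.inter (isClosed_compl_iff.2 hU)
  have hS0nb : ¬ IsBoundary B S0 := fun hb => ((hSmin S0 hb) hp).2 rfl
  have hex : ∃ f ∈ B, nsup f S0 ≠ nsup f univ := by
    by_contra hc; push_neg at hc
    exact hS0nb ⟨hS0c, fun f hf => hc f hf⟩
  obtain ⟨f, hfB, hfne⟩ := hex
  have hlt : nsup f S0 < nsup f univ := lt_of_le_of_ne (nsup_le_univ f S0) hfne
  have hSb : nsup f S = nsup f univ := hS.2 f hfB
  have hfp : ‖f p‖ = nsup f univ := by
    obtain ⟨x, hxS, hx⟩ := nsup_attain f hS.1 ⟨p, hp⟩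
    by_cases hxp : x = p
    · rw [← hSb, hx, hxp]
    · exfalso
      have h1 : ‖f x‖ ≤ nsup f S0 := le_nsup f ⟨hxS, hxp⟩
      rw [← hx, hSb] at h1
      linarith
  have hfppos : 0 < ‖f p‖ := by
    rw [hfp]; exact lt_of_le_of_lt (nsup_nonneg f S0) hlt
  have hfpne : f p ≠ 0 := norm_pos_iff.mp hfppos
  set c : ℂ := (f p)⁻¹ with hcdef
  set g : C(Y,ℂ) := c • f with hgdef
  have hgB : g ∈ B := SMulMemClass.smul_mem c hfB
  have hgapp : ∀ x, g x = (f p)⁻¹ * f x := fun x => rfl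
  have hgp : g p = 1 := by rw [hgapp, inv_mul_cancel₀ hfpne]
  have hgnorm : ∀ x, ‖g x‖ = ‖f x‖ / ‖f p‖ := by
    intro x
    rw [hgapp, norm_mul, norm_inv]
    ring
  set r : ℝ := nsup f S0 / ‖f p‖ with hrdef
  have hr0 : 0 ≤ r := div_nonneg (nsup_nonneg f S0) hfppos.le
  have hr1 : r < 1 := by
    rw [hrdef, div_lt_one hfppos, hfp]; exact hlt
  have hgS0 : ∀ x ∈ S0, ‖g x‖ ≤ r := by
    intro x hx
    rw [hgnorm, hrdef]
    gcongr
    exact le_nsup f hx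
  have hpowB : ∀ n : ℕ, g^n ∈ B := fun n => pow_mem hgB n
  have hpowapp : ∀ (n : ℕ) (x : Y), (g^n) x = (g x)^n := fun n x => by
    simp
  have hdiffbound : ∀ n : ℕ, ‖g^(n+1) - g^n‖ ≤ 2 * r^n := by
    intro n
    have hmem : g^(n+1) - g^n ∈ B := sub_mem (hpowB _) (hpowB _)
    have hb : nsup (g^(n+1) - g^n) S = nsup (g^(n+1) - g^n) univ := hS.2 _ hmem
    rw [← nsup_univ (g^(n+1) - g^n), ← hb]
    apply nsup_le _ (by positivity)
    intro x hxS
    have hx : (g^(n+1) - g^n) x = (g x)^(n+1) - (g x)^n := by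
      simp [ContinuousMap.sub_apply, hpowapp]
    by_cases hxp : x = p
    · rw [hx, hxp, hgp]
      simp
      positivity
    · have hgx : ‖g x‖ ≤ r := hgS0 x ⟨hxS, hxp⟩
      rw [hx]
      have h5 : (g x)^(n+1) - (g x)^n = (g x)^n * (g x - 1) := by ring
      rw [h5, norm_mul, norm_pow]
      have h1 : ‖g x‖^n ≤ r^n := pow_le_pow_left₀ (norm_nonneg _) hgx n
      have h2 : ‖g x - 1‖ ≤ 2 := by
        calc ‖g x - 1‖ ≤ ‖g x‖ + ‖(1:ℂ)‖ := norm_sub_le _ _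
          _ ≤ r + 1 := by rw [norm_one]; linarith
          _ ≤ 2 := by linarith
      calc ‖g x‖^n * ‖g x - 1‖ ≤ r^n * 2 :=
            mul_le_mul h1 h2 (norm_nonneg _) (by positivity)
        _ = 2 * r^n := by ring
  have hcauchy : CauchySeq (fun n => g^n) := by
    apply cauchySeq_of_le_geometric r 2 hr1
    intro n
    rw [dist_eq_norm]
    have h6 : g^n - g^(n+1) = -(g^(n+1) - g^n) := by ring
    rw [h6, norm_neg]
    exact hdiffbound n
  obtain ⟨e, he⟩ := cauchySeq_tendsto_of_complete hcauchy
  have heB : e ∈ B := hBcl.mem_of_tendsto he (Filter.Eventually.of_forall hpowB)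
  have hev : ∀ x : Y, Filter.Tendsto (fun n => (g x)^n) Filter.atTop (nhds (e x)) := by
    intro x
    have h7 := ((continuous_eval_const x).tendsto e).comp he
    have h8 : (fun n => (g^n) x) = fun n => (g x)^n := funext fun n => hpowapp n x
    rw [← h8]
    exact h7
  have hep : e p = 1 := by
    have h9 : (fun n : ℕ => (g p)^n) = fun _ => (1:ℂ) := funext fun n => by
      rw [hgp, one_pow]
    have h10 := hev p
    rw [h9] at h10
    exact tendsto_nhds_unique h10 tendsto_const_nhds
  have heS0 : ∀ x ∈ S0, e x = 0 := fun x hx =>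
    tendsto_nhds_unique (hev x)
      (tendsto_pow_atTop_nhds_zero_of_norm_lt_one (lt_of_le_of_lt (hgS0 x hx) hr1))
  have hidem : ∀ x, e x = 0 ∨ e x = 1 := by
    intro x
    have h2 : Filter.Tendsto (fun n => (g x)^(2*n)) Filter.atTop (nhds (e x * e x)) := by
      have h11 := (hev x).mul (hev x)
      have h12 : (fun n : ℕ => (g x)^n * (g x)^n) = fun n => (g x)^(2*n) :=
        funext fun n => by rw [← pow_add, two_mul]
      rwa [h12] at h11
    have h3 : Filter.Tendsto (fun n => (g x)^(2*n)) Filter.atTop (nhds (e x)) := by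
      have h13 : Filter.Tendsto (fun n : ℕ => 2*n) Filter.atTop Filter.atTop :=
        Filter.tendsto_atTop_atTop.mpr fun b => ⟨b, fun a ha => by omega⟩
      exact (hev x).comp h13
    have h14 : e x * e x = e x := tendsto_nhds_unique h2 h3
    have h15 : e x * (e x - 1) = 0 := by linear_combination h14
    rcases mul_eq_zero.mp h15 with h | h
    · exact Or.inl h
    · exact Or.inr (by linear_combination h)
  have hkill : ∀ q : C(Y,ℂ), q ∈ B → q p = 0 → e * q = 0 := by
    intro q hqB hqp
    have hmem : e * q ∈ B := mul_mem heB hqB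
    have h16 : ‖e * q‖ = nsup (e*q) S := by
      have hb : nsup (e*q) S = nsup (e*q) univ := hS.2 _ hmem
      rw [hb, nsup_univ]
    have hz : nsup (e*q) S ≤ 0 := by
      apply nsup_le _ le_rfl
      intro x hxS
      by_cases hxp : x = p
      · have : (e * q) x = e x * q x := rfl
        rw [this, hxp, hqp, mul_zero]
        simp
      · have : (e * q) x = e x * q x := rfl
        rw [this, heS0 x ⟨hxS, hxp⟩, zero_mul]
        simp
    have h17 : ‖e * q‖ ≤ 0 := h16 ▸ hz
    exact norm_le_zero_iff.mp h17
  have heq : ∀ x, e x = if x = p then 1 else 0 := by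
    intro x
    by_cases hxp : x = p
    · rw [if_pos hxp, hxp, hep]
    · rw [if_neg hxp]
      rcases hidem x with h0 | h1
      · exact h0
      · exfalso
        obtain ⟨_, ⟨q0, hq0B, rfl⟩, hqne⟩ := hB hxp
        set q : C(Y,ℂ) := q0 - (q0 p) • (1 : C(Y,ℂ)) with hqdef
        have hqB : q ∈ B := sub_mem hq0B (SMulMemClass.smul_mem _ (one_mem B))
        have hqp : q p = 0 := by
          have : q p = q0 p - q0 p * 1 := rfl
          rw [this]; ring
        have h18 := hkill q hqB hqp
        have h19 : e x * q x = 0 := by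
          have : (e * q) x = e x * q x := rfl
          rw [← this, h18]; rfl
        rw [h1, one_mul] at h19
        have h20 : q x = q0 x - q0 p * 1 := rfl
        rw [h20] at h19
        have h23 : q0 x = q0 p := by linear_combination h19
        exact hqne h23
  have hopen : IsOpen ({p} : Set Y) := by
    have h21 : ({p} : Set Y) = e ⁻¹' (Metric.ball (1:ℂ) (1/2)) := by
      ext x
      simp only [mem_singleton_iff, mem_preimage, Metric.mem_ball]
      constructor
      · intro hxp
        rw [hxp, hep]
        simp
      · intro hd
        by_contra hxp
        have h22 : e x = 0 := by
          rcases hidem x with h0 | h1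
          · exact h0
          · exfalso
            apply hxp
            by_contra hxp2
            have := heq x
            rw [if_neg hxp2, h1] at this
            exact one_ne_zero this
        rw [h22] at hd
        simp at hd
        norm_num at hd
    rw [h21]
    exact (map_continuous e).isOpen_preimage _ Metric.isOpen_ball
  exact ⟨e, heB, heq, hopen⟩

/-- Norm-controlled lift across an essential set. -/
lemma trunc_lift {X : Type*} [TopologicalSpace X] [CompactSpace X] [T2Space X]
    (A : Subalgebra ℂ C(X,ℂ)) {E : Set X} (hE : IsEssential A E)
    {f : C(X,ℂ)} (hf : f ∈ A) {r : ℝ} (hr : 0 ≤ r) (hfr : ∀ x ∈ E, ‖f x‖ ≤ r) :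
    ∃ f' ∈ A, (∀ x ∈ E, f' x = f x) ∧ ‖f'‖ ≤ r := by
  rcases eq_or_lt_of_le hr with hr0 | hr0
  · refine ⟨0, zero_mem A, fun x hx => ?_, by simp [← hr0]⟩
    have h1 := hfr x hx
    rw [← hr0] at h1
    have h2 : f x = 0 := norm_le_zero_iff.mp h1
    simp [h2]
  · have hden : ∀ x : X, (0:ℝ) < max r ‖f x‖ := fun x => lt_max_of_lt_left hr0
    have hcont : Continuous fun x => ((r / max r ‖f x‖ : ℝ) : ℂ) * f x := by
      refine Continuous.mul (Complex.continuous_ofReal.comp ?_) (map_continuous f)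
      exact continuous_const.div (continuous_const.max (map_continuous f).norm)
        (fun x => (hden x).ne')
    set f' : C(X,ℂ) := ⟨fun x => ((r / max r ‖f x‖ : ℝ) : ℂ) * f x, hcont⟩ with hf'
    have hagree : ∀ x ∈ E, f' x = f x := by
      intro x hx
      have h1 : max r ‖f x‖ = r := max_eq_left (hfr x hx)
      show ((r / max r ‖f x‖ : ℝ) : ℂ) * f x = f x
      rw [h1, div_self hr0.ne', Complex.ofReal_one, one_mul]
    have hmem : f' ∈ A := by
      have h1 : f - f' ∈ A := vanish_mem A hE fun x hx => by
        simp [ContinuousMap.sub_apply, hagree x hx]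
      have h2 : f' = f - (f - f') := by ring
      rw [h2]; exact sub_mem hf h1
    refine ⟨f', hmem, hagree, ?_⟩
    apply ContinuousMap.norm_le _ hr |>.mpr
    intro x
    have h3 : ‖f' x‖ = (r / max r ‖f x‖) * ‖f x‖ := by
      show ‖((r / max r ‖f x‖ : ℝ) : ℂ) * f x‖ = _
      rw [norm_mul, Complex.norm_real, Real.norm_of_nonneg (div_nonneg hr (le_of_lt (hden x)))]
    rw [h3, div_mul_eq_mul_div, div_le_iff₀ (hden x)]
    have h4 : ‖f x‖ ≤ max r ‖f x‖ := le_max_right _ _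
    nlinarith [norm_nonneg (f x)]

set_option maxHeartbeats 1000000 in
/-- The restriction of a closed algebra to its essential set is closed. -/
lemma restrict_closed {X : Type*} [TopologicalSpace X] [CompactSpace X] [T2Space X]
    (A : Subalgebra ℂ C(X,ℂ)) (hAcl : IsClosed (A : Set C(X,ℂ))) {E : Set X}
    (hE : IsEssential A E) : IsClosed (restrictAlg A E : Set C(E,ℂ)) := by
  haveI : CompactSpace E := isCompact_iff_compactSpace.mp hE.1.isCompact
  apply isClosed_of_closure_subset
  intro h hh
  have hchoice : ∀ n : ℕ, ∃ b ∈ (restrictAlg A E : Set C(E,ℂ)), dist h b < (1/2:ℝ)^(n+2) :=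
    fun n => Metric.mem_closure_iff.mp hh _ (by positivity)
  choose b hbB hbd using hchoice
  have hlift : ∀ n, ∃ g : C(X,ℂ), g ∈ A ∧ ∀ x : E, g x = b n x := by
    intro n
    obtain ⟨g, hgA, hg⟩ := hbB n
    exact ⟨g, hgA, fun x => by rw [← hg]; rfl⟩
  choose g hgA hgb using hlift
  have hdiff : ∀ n, ∀ x ∈ E, ‖(g (n+1) - g n) x‖ ≤ (1/2:ℝ)^(n+1) := by
    intro n x hx
    set xE : ↥E := ⟨x, hx⟩ with hxE
    have e1 : (g (n+1) - g n) x = b (n+1) xE - b n xE := by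
      exact congrArg₂ (· - ·) (hgb (n+1) xE) (hgb n xE)
    rw [e1, ← dist_eq_norm]
    have step1 : dist (b (n+1) xE) (b n xE) ≤ dist (b (n+1)) (b n) :=
      ContinuousMap.dist_apply_le_dist xE
    have step2 : dist (b (n+1)) (b n) ≤ dist (b (n+1)) h + dist h (b n) :=
      dist_triangle (b (n+1)) h (b n)
    have h1 := hbd (n+1)
    have h2 := hbd n
    have h3 : ((1:ℝ)/2)^(n+1+2) ≤ (1/2:ℝ)^(n+2) :=
      pow_le_pow_of_le_one (by norm_num) (by norm_num) (by omega)
    have h4 : ((1:ℝ)/2)^(n+2) + (1/2:ℝ)^(n+2) = (1/2:ℝ)^(n+1) := by ring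
    rw [dist_comm (b (n+1)) h] at step2
    linarith
  have hu : ∀ n, ∃ u ∈ A, (∀ x ∈ E, u x = (g (n+1) - g n) x) ∧ ‖u‖ ≤ (1/2:ℝ)^(n+1) :=
    fun n => trunc_lift A hE (sub_mem (hgA (n+1)) (hgA n)) (by positivity) (hdiff n)
  choose u huA hue hun using hu
  set F : ℕ → C(X,ℂ) := fun n => g 0 + (Finset.range n).sum u with hF
  have hFA : ∀ n, F n ∈ A := fun n =>
    add_mem (hgA 0) (Subalgebra.sum_mem A fun k _ => huA k)
  have hFb : ∀ n, ∀ x : E, F n x = b n x := by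
    intro n
    induction n with
    | zero => intro x; simp [hF, hgb 0 x]
    | succ n ih =>
      intro x
      have e1 : F (n+1) = F n + u n := by
        simp [hF, Finset.sum_range_succ, add_assoc]
      rw [e1]
      have e2 : (F n + u n) (x : X) = F n x + u n x := rfl
      rw [e2, ih x, hue n x x.2]
      simp [ContinuousMap.sub_apply, hgb (n+1) x, hgb n x]
  have hcauchy : CauchySeq F := by
    apply cauchySeq_of_le_geometric (1/2:ℝ) (1/2:ℝ) (by norm_num)
    intro n
    have e1 : F (n+1) = F n + u n := by
      simp [hF, Finset.sum_range_succ, add_assoc]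
    rw [dist_eq_norm, e1]
    have e2 : F n - (F n + u n) = -(u n) := by ring
    rw [e2, norm_neg]
    calc ‖u n‖ ≤ (1/2:ℝ)^(n+1) := hun n
      _ = (1/2:ℝ) * (1/2:ℝ)^n := by ring
  obtain ⟨Fl, hFl⟩ := cauchySeq_tendsto_of_complete hcauchy
  have hFlA : Fl ∈ A := hAcl.mem_of_tendsto hFl (Filter.Eventually.of_forall hFA)
  refine ⟨Fl, hFlA, ?_⟩
  ext x
  have t1 : Filter.Tendsto (fun n => F n (x : X)) Filter.atTop (nhds (Fl (x : X))) :=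
    ((continuous_eval_const ((x : X))).tendsto Fl).comp hFl
  have t2 : Filter.Tendsto (fun n => b n x) Filter.atTop (nhds (h x)) := by
    rw [tendsto_iff_dist_tendsto_zero]
    have hb2 : ∀ n, dist (b n x) (h x) ≤ (1/2:ℝ)^(n+2) := by
      intro n
      have h1 : dist (b n x) (h x) ≤ dist (b n) h := ContinuousMap.dist_apply_le_dist x
      rw [dist_comm (b n) h] at h1
      exact h1.trans (le_of_lt (hbd n))
    have hlim : Filter.Tendsto (fun n : ℕ => ((1:ℝ)/2)^(n+2)) Filter.atTop (nhds 0) := by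
      have := (tendsto_pow_atTop_nhds_zero_of_lt_one (by norm_num : (0:ℝ) ≤ 1/2)
        (by norm_num : (1/2:ℝ) < 1)).comp (Filter.tendsto_add_atTop_nat 2)
      simpa [Function.comp_def] using this
    exact squeeze_zero (fun n => dist_nonneg) hb2 hlim
  have t1' : Filter.Tendsto (fun n => b n x) Filter.atTop (nhds (Fl (x : X))) := by
    have : (fun n => F n (x : X)) = fun n => b n x := funext fun n => hFb n x
    rwa [this] at t1
  exact tendsto_nhds_unique t1' t2


end Aux

/-- Let `A` be a closed proper subalgebra of `C(X, ℂ)` separating points, with essential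
set `E = E(A)` (the smallest closed essential set) and Šilov boundary `S = Sh(A)` (the
smallest closed boundary).  Then `E ∪ S = X` and `E ∩ S ≠ ∅`; every isolated point `p`
of `S` is isolated in `X` with `χ_{p} ∈ A` (so `p ∉ E(A)`); and, if `E ≠ ∅`, the Šilov
boundary of `A↾E` is perfect. -/
theorem stmt19 {X : Type*} [TopologicalSpace X] [CompactSpace X] [T2Space X]
    (A : Subalgebra ℂ C(X, ℂ)) (hA : A.SeparatesPoints)
    (hAcl : IsClosed (A : Set C(X, ℂ))) (hAne : A ≠ ⊤)
    (E : Set X) (hE : IsEssential A E) (hEmin : ∀ H : Set X, IsEssential A H → E ⊆ H)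
    (S : Set X) (hS : IsBoundary A S) (hSmin : ∀ T : Set X, IsBoundary A T → S ⊆ T) :
    E ∪ S = Set.univ ∧
      (E ∩ S).Nonempty ∧
      (∀ p ∈ S, (∃ U : Set X, IsOpen U ∧ U ∩ S = {p}) →
        IsOpen ({p} : Set X) ∧ chiMem A {p}) ∧
      (E.Nonempty →
        ∀ S' : Set E, IsBoundary (restrictAlg A E) S' →
          (∀ T : Set E, IsBoundary (restrictAlg A E) T → S' ⊆ T) →
          Perfect S' ∧ S'.Nonempty) := by
  have hXne : Nonempty X := X_nonempty A hAne
  have hEc : IsClosed E := hE.1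
  have hSc : IsClosed S := hS.1
  -- Part 1 : E ∪ S = univ
  have part1 : E ∪ S = Set.univ := by
    by_contra h
    obtain ⟨x, hx⟩ : ∃ x, x ∉ E ∪ S := by
      by_contra h2; push_neg at h2; exact h (eq_univ_of_forall h2)
    obtain ⟨f, hf0, hf1, hfle⟩ := urysohnC (hEc.union hSc) (isClosed_singleton (x := x))
      (disjoint_singleton_right.2 hx)
    have hfA : f ∈ A := vanish_mem A hE fun y hy => hf0 y (Or.inl hy)
    have hb := hS.2 f hfA
    have h1 : nsup f Set.univ ≥ 1 := by
      have := le_nsup f (mem_univ x); rw [hf1 x rfl] at this; simpa using this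
    have h2 : nsup f S ≤ 0 :=
      nsup_le f le_rfl fun y hy => by rw [hf0 y (Or.inr hy)]; simp
    change nsup f S = nsup f Set.univ at hb
    linarith
  -- S and E nonempty
  have hSne : S.Nonempty := by
    rcases eq_empty_or_nonempty S with hSe | h
    · exfalso
      have hb := hS.2 1 (one_mem A)
      change nsup 1 S = nsup 1 Set.univ at hb
      rw [hSe] at hb
      have h1 : nsup (1 : C(X,ℂ)) Set.univ ≥ 1 := by
        have := le_nsup (1 : C(X,ℂ)) (mem_univ (Classical.arbitrary X))
        simpa using this
      have h0 : nsup (1 : C(X,ℂ)) (∅ : Set X) = 0 := by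
        simp [nsup, Real.sSup_empty]
      linarith [hb ▸ h0]
    · exact h
  have hEne0 : E.Nonempty := by
    rcases eq_empty_or_nonempty E with hEe | h
    · exact absurd (hEe ▸ hE) (fun h => empty_not_essential A hAne h)
    · exact h
  -- Part 2 : E ∩ S ≠ ∅
  have part2 : (E ∩ S).Nonempty := by
    rcases eq_empty_or_nonempty (E ∩ S) with hES | h
    · exfalso
      have hd : Disjoint E S := disjoint_iff_inter_eq_empty.2 hES
      obtain ⟨u, hu0, hu1, hule⟩ := urysohnC hEc hSc hd
      have huA : u ∈ A := vanish_mem A hE hu0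
      have hvA : (1 : C(X,ℂ)) - u ∈ A := sub_mem (one_mem A) huA
      have hb := hS.2 _ hvA
      change nsup _ S = nsup _ Set.univ at hb
      obtain ⟨e, he⟩ := hEne0
      have h1 : nsup ((1 : C(X,ℂ)) - u) Set.univ ≥ 1 := by
        have := le_nsup ((1 : C(X,ℂ)) - u) (mem_univ e)
        have he' : ((1 : C(X,ℂ)) - u) e = 1 := by
          simp [ContinuousMap.sub_apply, hu0 e he]
        rw [he'] at this; simpa using this
      have h2 : nsup ((1 : C(X,ℂ)) - u) S ≤ 0 :=
        nsup_le _ le_rfl fun y hy => by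
          simp [ContinuousMap.sub_apply, hu1 y hy]
      linarith
    · exact h
  refine ⟨part1, part2, ?_, ?_⟩
  -- Part 3 : isolated points of S
  · rintro p hp ⟨U, hU, hUS⟩
    obtain ⟨e, heB, heval, hopen⟩ := core A hA hAcl S hS hSmin hp hU hUS
    exact ⟨hopen, ⟨e, heB, fun x => by rw [heval x]; simp⟩⟩
  -- Part 4 : Šilov boundary of the restriction is perfect
  · intro hEne S' hS' hS'min
    haveI : CompactSpace E := isCompact_iff_compactSpace.mp hEc.isCompact
    haveI : Nonempty E := hEne.to_subtype
    have hBcl : IsClosed ((restrictAlg A E : Subalgebra ℂ C(E,ℂ)) : Set C(E,ℂ)) :=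
      restrict_closed A hAcl hE
    have hBsep : (restrictAlg A E).SeparatesPoints := by
      rintro x y hxy
      obtain ⟨_, ⟨f, hfA, rfl⟩, hfxy⟩ := hA (fun h => hxy (Subtype.ext h) : (x : X) ≠ y)
      exact ⟨_, ⟨_, ⟨f, hfA, rfl⟩, rfl⟩, hfxy⟩
    have hS'ne : S'.Nonempty := by
      rcases eq_empty_or_nonempty S' with hSe | h
      · exfalso
        have hb := hS'.2 1 (one_mem _)
        change nsup 1 S' = nsup 1 Set.univ at hb
        rw [hSe] at hb
        have h1 : nsup (1 : C(E,ℂ)) Set.univ ≥ 1 := by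
          have := le_nsup (1 : C(E,ℂ)) (mem_univ (Classical.arbitrary E))
          simpa using this
        have h0 : nsup (1 : C(E,ℂ)) (∅ : Set E) = 0 := by
          simp [nsup, Real.sSup_empty]
        linarith [hb ▸ h0]
      · exact h
    refine ⟨⟨hS'.1, ?_⟩, hS'ne⟩
    intro p hpS'
    by_contra hacc
    rw [accPt_iff_nhds] at hacc
    push_neg at hacc
    obtain ⟨N, hN, hNs⟩ := hacc
    obtain ⟨V, hVN, hV, hpV⟩ := mem_nhds_iff.mp hN
    have hVS' : V ∩ S' = {p} := by
      apply Subset.antisymm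
      · rintro y ⟨hyV, hyS⟩
        exact hNs y ⟨hVN hyV, hyS⟩
      · rintro y rfl; exact ⟨hpV, hpS'⟩
    obtain ⟨e, heB, heval, hopen⟩ :=
      core (restrictAlg A E) hBsep hBcl S' hS' hS'min hpS' hV hVS'
    -- `{p}` is open in `E`: get an open `W ⊆ X` with `W ∩ E = {↑p}`
    obtain ⟨W, hW, hWpre⟩ := isOpen_induced_iff.mp hopen
    -- the lift of `e`
    obtain ⟨gA, hgA, hgE⟩ := heB
    have hgval : ∀ x : E, gA x = e x := fun x => by
      rw [← hgE]; rfl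
    -- `E \ {↑p}` is essential, contradicting minimality of `E`
    have hess : IsEssential A (E \ {(p : X)}) := by
      constructor
      · have : E \ {(p : X)} = E ∩ Wᶜ := by
          ext x
          constructor
          · rintro ⟨hxE, hxp⟩
            refine ⟨hxE, fun hxW => hxp ?_⟩
            have : (⟨x, hxE⟩ : E) ∈ (Subtype.val ⁻¹' W : Set E) := hxW
            rw [hWpre] at this
            simpa [Subtype.ext_iff] using this
          · rintro ⟨hxE, hxW⟩
            refine ⟨hxE, fun hxp => hxW ?_⟩
            have : (⟨x, hxE⟩ : E) ∈ ({p} : Set E) := by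
              simp only [mem_singleton_iff] at hxp ⊢
              exact Subtype.ext hxp
            rw [← hWpre] at this
            exact this
        rw [this]
        exact hE.1.inter (isClosed_compl_iff.2 hW)
      · intro f g hfg
        have hfg' : ∀ x ∈ E, x ≠ (p : X) → f x = g x := by
          intro x hxE hxp
          have := ContinuousMap.congr_fun hfg ⟨x, hxE, hxp⟩
          simpa using this
        set c : ℂ := g p - f p with hc
        have hkey : (f + c • gA).restrict E = g.restrict E := by
          ext ⟨x, hxE⟩
          simp only [ContinuousMap.restrict_apply, ContinuousMap.add_apply,
            ContinuousMap.smul_apply]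
          by_cases hxp : x = (p : X)
          · have h1 : gA x = 1 := by
              have h2 := hgval ⟨x, hxE⟩
              rw [heval] at h2
              rw [h2]
              simp [Subtype.ext_iff, hxp]
            rw [h1, hxp]
            simp only [smul_eq_mul, mul_one, hc]
            ring
          · have h1 : gA x = 0 := by
              have h2 := hgval ⟨x, hxE⟩
              rw [heval] at h2
              rw [h2]
              simp [Subtype.ext_iff, hxp]
            rw [h1, hfg' x hxE hxp]
            simp
        have h1 := hE.2 (f + c • gA) g hkey
        constructor
        · intro hfA
          exact h1.mp (add_mem hfA (SMulMemClass.smul_mem c hgA))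
        · intro hgA'
          have := h1.mpr hgA'
          have h2 : f = (f + c • gA) - c • gA := by ring
          rw [h2]
          exact sub_mem this (SMulMemClass.smul_mem c hgA)
    have := hEmin _ hess p.2
    exact this.2 rfl
end
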